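/- arXiv:math/0010322 — 2 statements merged into one kernel-verified Lean document; each statement's English description precedes it below -/
import Mathlib

section
/- Under the straightening hypothesis, the leading exponent of a product of two basis monomials is the sum of their exponents: for all finitely supported functions m, n : I → ℕ, the product M(m)·M(n) is nonzero and |M(m)·M(n)| = m + n in O. (Proposition 3.3 of the paper.) -/
/-!
Proposition 3.3: under the straightening hypothesis, for all finitely
supported exponent functions `m n : I →₀ ℕ`, the product of ordered
monomials `M(m) * M(n)` is nonzero and has leading exponent `m + n`.
-/

open scoped BigOperators

/-- The ordered monomial `∏ a_i ^ m i`, the product taken over the support of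
`m` in strictly decreasing order of the index `i`. -/
noncomputable def ordMon {I : Type*} [LinearOrder I] {A : Type*} [Ring A]
    (a : I → A) (m : I →₀ ℕ) : A :=
  ((m.support.sort (· ≤ ·)).reverse.map (fun i => a i ^ m i)).prod

/-- The total order on `O = (I →₀ ℕ)`: `m < n` iff at the largest index `j`
where `m` and `n` differ one has `m j < n j`. -/
def leadLT {I : Type*} [LinearOrder I] (m n : I →₀ ℕ) : Prop :=
  ∃ j, m j < n j ∧ ∀ i, j < i → m i = n i

/-- `μ` is the leading exponent `|x|` of `x`: the largest element of `O`
whose basis monomial occurs with nonzero coefficient in the expansion of `x`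
with respect to the basis `B` of monomials. -/
def isLead {I K A : Type*} [LinearOrder I] [Field K] [Ring A] [Algebra K A]
    (B : Module.Basis (I →₀ ℕ) K A) (x : A) (μ : I →₀ ℕ) : Prop :=
  B.repr x μ ≠ 0 ∧ ∀ ν, B.repr x ν ≠ 0 → ν = μ ∨ leadLT ν μ

namespace LeadAux

section Order
variable {I : Type*} [LinearOrder I]




theorem leadLT_irrefl (m : I →₀ ℕ) : ¬ leadLT m m := by
  rintro ⟨j, hj, -⟩; exact lt_irrefl _ hj

theorem leadLT_trans {m n p : I →₀ ℕ} (h1 : leadLT m n) (h2 : leadLT n p) :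
    leadLT m p := by
  obtain ⟨j1, hj1, ha1⟩ := h1
  obtain ⟨j2, hj2, ha2⟩ := h2
  rcases lt_trichotomy j1 j2 with h | h | h
  · exact ⟨j2, by rw [ha1 j2 h]; exact hj2, fun i hi => (ha1 i (h.trans hi)).trans (ha2 i hi)⟩
  · subst h; exact ⟨j1, hj1.trans hj2, fun i hi => (ha1 i hi).trans (ha2 i hi)⟩
  · exact ⟨j1, by rw [← ha2 j1 h]; exact hj1, fun i hi => (ha1 i hi).trans (ha2 i (h.trans hi))⟩

theorem leadLT_add_left {m n : I →₀ ℕ} (k : I →₀ ℕ) (h : leadLT m n) :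
    leadLT (k + m) (k + n) := by
  obtain ⟨j, hj, ha⟩ := h
  exact ⟨j, by simpa using hj, fun i hi => by simp [ha i hi]⟩

theorem leadLT_self_add {m n : I →₀ ℕ} (hm : m ≠ 0) : leadLT n (m + n) := by
  have hs : m.support.Nonempty := Finsupp.support_nonempty_iff.2 hm
  refine ⟨m.support.max' hs, ?_, fun i hi => ?_⟩
  · have : m (m.support.max' hs) ≠ 0 := Finsupp.mem_support_iff.1 (m.support.max'_mem hs)
    simp only [Finsupp.add_apply]
    omega
  · have : m i = 0 := by
      by_contra h
      exact absurd (Finset.le_max' _ _ (Finsupp.mem_support_iff.2 h)) (not_le.2 hi)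
    simp [this]

/-- `≤` or `<` combined with `<` gives `<`. -/
theorem leadLT_of_le_of_lt {m n p : I →₀ ℕ} (h1 : m = n ∨ leadLT m n) (h2 : leadLT n p) :
    leadLT m p := by
  rcases h1 with rfl | h1
  · exact h2
  · exact leadLT_trans h1 h2

theorem leadLT_of_lt_of_le {m n p : I →₀ ℕ} (h1 : leadLT m n) (h2 : n = p ∨ leadLT n p) :
    leadLT m p := by
  rcases h2 with rfl | h2
  · exact h1
  · exact leadLT_trans h1 h2

/-- `n ≤ m + n` in the lead order. -/
theorem le_add_left (m n : I →₀ ℕ) : n = m + n ∨ leadLT n (m + n) := by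
  by_cases hm : m = 0
  · left; simp [hm]
  · right; exact leadLT_self_add hm

/-- If `ν < μ` and all indices in the support of `μ` are `≤ j`, then the same
holds for `ν`. -/
theorem support_le_of_leadLT {ν μ : I →₀ ℕ} {j : I}
    (h : leadLT ν μ) (hμ : ∀ k ∈ μ.support, k ≤ j) :
    ∀ k ∈ ν.support, k ≤ j := by
  intro k hk
  by_contra hkj
  push_neg at hkj
  obtain ⟨j0, hj0, ha⟩ := h
  by_cases hkj0 : j0 < k
  · have : ν k = μ k := ha k hkj0
    have hk' : μ k ≠ 0 := by
      rw [← this]; exact Finsupp.mem_support_iff.1 hk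
    exact absurd (hμ k (Finsupp.mem_support_iff.2 hk')) (not_le.2 hkj)
  · have hj0k : k ≤ j0 := not_lt.1 hkj0
    have h1 : μ j0 ≠ 0 := Nat.ne_zero_of_lt hj0
    have h2 : j0 ≤ j := hμ j0 (Finsupp.mem_support_iff.2 h1)
    exact absurd (lt_of_lt_of_le hkj (le_trans hj0k h2)) (lt_irrefl j)

theorem leadLT_wf (hwf : WellFounded ((· < ·) : I → I → Prop)) :
    WellFounded (leadLT (I := I)) := by
  haveI : IsTrichotomous I (fun a b : I => b < a) :=
    ⟨fun a b h1 h2 => le_antisymm (not_lt.1 h1) (not_lt.1 h2)⟩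
  have hlex : WellFounded (Finsupp.Lex (fun a b : I => b < a) ((· < ·) : ℕ → ℕ → Prop)) :=
    Finsupp.Lex.wellFounded' (fun n => Nat.not_lt_zero n) (Nat.lt_wfRel.wf) hwf
  refine Subrelation.wf ?_ hlex
  rintro m n ⟨j, hj, ha⟩
  exact ⟨j, fun i hi => ha i hi, hj⟩


theorem leadLT_add_right {m n : I →₀ ℕ} (k : I →₀ ℕ) (h : leadLT m n) :
    leadLT (m + k) (n + k) := by
  rw [add_comm m k, add_comm n k]
  exact leadLT_add_left k h

theorem degree_add (m n : I →₀ ℕ) :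
    (m + n).degree = m.degree + n.degree := by
  show (m + n).sum (fun _ c => c) = m.sum (fun _ c => c) + n.sum (fun _ c => c)
  exact Finsupp.sum_add_index' (fun _ => rfl) (fun _ _ _ => rfl)

theorem degree_single (i : I) (c : ℕ) : (Finsupp.single i c).degree = c := by
  show (Finsupp.single i c).sum (fun _ c => c) = c
  exact Finsupp.sum_single_index rfl

end Order

section Mon


variable {I : Type*} [LinearOrder I] {A : Type*} [Ring A] (a : I → A)

theorem sort_insert_max {s : Finset I} {i : I} (h : ∀ b ∈ s, b ≤ i) (hi : i ∉ s) :
    (insert i s).sort (· ≤ ·) = s.sort (· ≤ ·) ++ [i] := by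
  refine (fun hp hs => List.Perm.eq_of_pairwise' (Finset.pairwise_sort _ _) hs hp) ?_ ?_
  · exact (Finset.sort_perm_toList _ _).trans ((Finset.toList_insert hi).trans
      (((Finset.sort_perm_toList _ _).symm.cons i).trans
        (List.perm_append_singleton _ _).symm))
  · rw [List.pairwise_append]
    refine ⟨Finset.pairwise_sort _ _, List.pairwise_singleton _ _, fun b hb c hc => ?_⟩
    rw [List.mem_singleton] at hc
    subst hc
    exact h b (Finset.mem_sort (α := I) (· ≤ ·) |>.1 hb)

theorem ordMon_zero : ordMon a (0 : I →₀ ℕ) = 1 := by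
  simp [ordMon]

theorem ordMon_congr {m n : I →₀ ℕ} (hs : m.support = n.support)
    (h : ∀ k ∈ m.support, m k = n k) : ordMon a m = ordMon a n := by
  unfold ordMon
  rw [hs]
  congr 1
  refine List.map_congr_left (fun k hk => ?_)
  rw [List.mem_reverse, Finset.mem_sort] at hk
  rw [← hs] at hk
  rw [h k hk]

/-- If all of the support of `n` is `< i`, then
`ordMon (single i c + n) = a i ^ c * ordMon n`. -/
theorem ordMon_single_add {n : I →₀ ℕ} {i : I} (h : ∀ k ∈ n.support, k < i) (c : ℕ) :
    ordMon a (Finsupp.single i c + n) = a i ^ c * ordMon a n := by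
  rcases Nat.eq_zero_or_pos c with rfl | hc
  · simp
  have hi : i ∉ n.support := fun hmem => lt_irrefl i (h i hmem)
  have hdisj : Disjoint (Finsupp.single i c).support n.support := by
    rw [Finsupp.support_single_ne_zero _ hc.ne']
    simpa using hi
  have hsupp : (Finsupp.single i c + n).support = insert i n.support := by
    rw [Finsupp.support_add_eq hdisj, Finsupp.support_single_ne_zero _ hc.ne']
    rfl
  unfold ordMon
  rw [hsupp, sort_insert_max (fun b hb => (h b hb).le) hi, List.reverse_append]
  simp only [List.reverse_singleton, List.singleton_append, List.map_cons, List.prod_cons]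
  congr 1
  · rw [Finsupp.add_apply, Finsupp.single_eq_same, Finsupp.notMem_support_iff.1 hi, add_zero]
  · refine congrArg _ (List.map_congr_left (fun k hk => ?_))
    rw [List.mem_reverse, Finset.mem_sort] at hk
    have hki : k ≠ i := fun hh => absurd (h k (hh ▸ hk)) (by simp [hh])
    rw [Finsupp.add_apply, Finsupp.single_eq_of_ne' (fun hh => hki hh.symm), zero_add]

/-- If all of the support of `n` is `> i`, then
`ordMon (n + single i c) = ordMon n * a i ^ c`. -/
theorem ordMon_add_single {n : I →₀ ℕ} {i : I} (h : ∀ k ∈ n.support, i < k) (c : ℕ) :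
    ordMon a (n + Finsupp.single i c) = ordMon a n * a i ^ c := by
  rcases Nat.eq_zero_or_pos c with rfl | hc
  · simp
  have hi : i ∉ n.support := fun hmem => lt_irrefl i (h i hmem)
  have hdisj : Disjoint n.support (Finsupp.single i c).support := by
    rw [Finsupp.support_single_ne_zero _ hc.ne']
    simpa using hi
  have hsupp : (n + Finsupp.single i c).support = insert i n.support := by
    rw [Finsupp.support_add_eq hdisj, Finsupp.support_single_ne_zero _ hc.ne']
    rw [Finset.union_comm]
    rfl
  unfold ordMon
  rw [hsupp, Finset.sort_insert (· ≤ ·) (fun b hb => (h b hb).le) hi]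
  simp only [List.reverse_cons, List.map_append, List.prod_append, List.map_cons,
    List.map_nil, List.prod_cons, List.prod_nil, mul_one]
  congr 1
  · refine congrArg _ (List.map_congr_left (fun k hk => ?_))
    rw [List.mem_reverse, Finset.mem_sort] at hk
    have hki : k ≠ i := fun hh => absurd (h k (hh ▸ hk)) (by simp [hh])
    rw [Finsupp.add_apply, Finsupp.single_eq_of_ne' (fun hh => hki hh.symm), add_zero]
  · rw [Finsupp.add_apply, Finsupp.single_eq_same, Finsupp.notMem_support_iff.1 hi, zero_add]

theorem ordMon_single (i : I) (c : ℕ) : ordMon a (Finsupp.single i c) = a i ^ c := by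
  have := ordMon_single_add a (n := 0) (i := i) (by simp) c
  simpa [ordMon_zero] using this

theorem ordMon_single_one (i : I) : ordMon a (Finsupp.single i 1) = a i := by
  simpa using ordMon_single a i 1

/-- Left absorption: if the support of `n` is `≤ i`, then
`a i * ordMon n = ordMon (single i 1 + n)`. -/
theorem mul_ordMon_of_support_le {n : I →₀ ℕ} {i : I} (h : ∀ k ∈ n.support, k ≤ i) :
    a i * ordMon a n = ordMon a (Finsupp.single i 1 + n) := by
  have herase : ∀ k ∈ (n.erase i).support, k < i := by
    intro k hk
    rw [Finsupp.support_erase, Finset.mem_erase] at hk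
    exact lt_of_le_of_ne (h k hk.2) hk.1
  have hn : Finsupp.single i (n i) + n.erase i = n := Finsupp.single_add_erase i n
  have h1 : Finsupp.single i 1 + n = Finsupp.single i (n i + 1) + n.erase i := by
    conv_lhs => rw [← hn]
    rw [← add_assoc, ← Finsupp.single_add, add_comm (1 : ℕ)]
  have e1 : ordMon a n = a i ^ n i * ordMon a (n.erase i) := by
    conv_lhs => rw [← hn]
    exact ordMon_single_add a herase _
  rw [h1, ordMon_single_add a herase, e1, pow_succ', mul_assoc]

/-- Right absorption: if the support of `n` is `≥ i`, then
`ordMon n * a i = ordMon (n + single i 1)`. -/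
theorem ordMon_mul_of_le_support {n : I →₀ ℕ} {i : I} (h : ∀ k ∈ n.support, i ≤ k) :
    ordMon a n * a i = ordMon a (n + Finsupp.single i 1) := by
  have herase : ∀ k ∈ (n.erase i).support, i < k := by
    intro k hk
    rw [Finsupp.support_erase, Finset.mem_erase] at hk
    exact lt_of_le_of_ne (h k hk.2) (Ne.symm hk.1)
  have hn : n.erase i + Finsupp.single i (n i) = n := Finsupp.erase_add_single i n
  have h1 : n + Finsupp.single i 1 = n.erase i + Finsupp.single i (n i + 1) := by
    conv_lhs => rw [← hn]
    rw [add_assoc, ← Finsupp.single_add]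
  have e1 : ordMon a n = ordMon a (n.erase i) * a i ^ n i := by
    conv_lhs => rw [← hn]
    exact ordMon_add_single a herase _
  rw [h1, ordMon_add_single a herase, e1, pow_succ, mul_assoc]


end Mon

section Rep

variable {I K A : Type*} [LinearOrder I] [Field K] [Ring A] [Algebra K A]
  (B : Module.Basis (I →₀ ℕ) K A)

/-- `x` has only exponents strictly below `μ`. -/
def Low (x : A) (μ : I →₀ ℕ) : Prop := ∀ ν, B.repr x ν ≠ 0 → leadLT ν μ

/-- `x` has leading exponent `μ` (with some nonzero leading coefficient). -/
def LeadsTo (x : A) (μ : I →₀ ℕ) : Prop :=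
  ∃ c : K, c ≠ 0 ∧ ∃ y : A, x = c • B μ + y ∧ Low B y μ

variable {B}

theorem low_zero {μ : I →₀ ℕ} : Low B (0 : A) μ := by
  intro ν hν
  simp at hν

theorem low_add {x y : A} {μ : I →₀ ℕ} (hx : Low B x μ) (hy : Low B y μ) :
    Low B (x + y) μ := by
  intro ν hν
  rw [map_add, Finsupp.add_apply] at hν
  by_cases h : B.repr x ν = 0
  · exact hy ν (by rw [h, zero_add] at hν; exact hν)
  · exact hx ν h

theorem low_smul {x : A} {μ : I →₀ ℕ} (c : K) (hx : Low B x μ) :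
    Low B (c • x) μ := by
  intro ν hν
  refine hx ν (fun h0 => hν ?_)
  rw [map_smul, Finsupp.smul_apply, h0, smul_zero]

theorem low_sum {ι : Type*} {s : Finset ι} {f : ι → A} {μ : I →₀ ℕ}
    (h : ∀ i ∈ s, Low B (f i) μ) : Low B (∑ i ∈ s, f i) μ := by
  classical
  induction s using Finset.induction_on with
  | empty => simpa using low_zero
  | insert _ _ hi ih =>
    rw [Finset.sum_insert hi]
    exact low_add (h _ (Finset.mem_insert_self _ _))
      (ih (fun i hi' => h i (Finset.mem_insert_of_mem hi')))

theorem low_basis {ν μ : I →₀ ℕ} (h : leadLT ν μ) : Low B (B ν) μ := by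
  intro σ hσ
  rw [B.repr_self] at hσ
  have : σ = ν := by
    by_contra hne
    exact hσ (Finsupp.single_eq_of_ne' (Ne.symm hne))
  subst this
  exact h

theorem low_mono {x : A} {ν μ : I →₀ ℕ} (hx : Low B x ν) (h : leadLT ν μ) :
    Low B x μ := fun σ hσ => leadLT_trans (hx σ hσ) h

theorem leadsTo_isLead {x : A} {μ : I →₀ ℕ} (h : LeadsTo B x μ) : isLead B x μ := by
  obtain ⟨c, hc, y, rfl, hy⟩ := h
  have hyμ : B.repr y μ = 0 := by
    by_contra h0
    exact leadLT_irrefl μ (hy μ h0)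
  constructor
  · rw [map_add, map_smul, B.repr_self, Finsupp.add_apply, Finsupp.smul_apply, hyμ,
      Finsupp.single_eq_same, add_zero, smul_eq_mul, mul_one]
    exact hc
  · intro ν hν
    by_cases hνμ : ν = μ
    · exact Or.inl hνμ
    · refine Or.inr (hy ν ?_)
      rw [map_add, map_smul, B.repr_self, Finsupp.add_apply, Finsupp.smul_apply,
        Finsupp.single_eq_of_ne' (Ne.symm hνμ), smul_zero, zero_add] at hν
      exact hν

theorem leadsTo_basis (μ : I →₀ ℕ) : LeadsTo B (B μ) μ :=
  ⟨1, one_ne_zero, 0, by simp, low_zero⟩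

theorem leadsTo_smul {x : A} {μ : I →₀ ℕ} {c : K} (hc : c ≠ 0) (h : LeadsTo B x μ) :
    LeadsTo B (c • x) μ := by
  obtain ⟨c', hc', y, rfl, hy⟩ := h
  exact ⟨c * c', mul_ne_zero hc hc', c • y, by rw [smul_add, smul_smul], low_smul c hy⟩

theorem leadsTo_add_low {x y : A} {μ : I →₀ ℕ} (hx : LeadsTo B x μ) (hy : Low B y μ) :
    LeadsTo B (x + y) μ := by
  obtain ⟨c, hc, y', rfl, hy'⟩ := hx
  exact ⟨c, hc, y' + y, by rw [add_assoc], low_add hy' hy⟩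

theorem leadsTo_low {x : A} {ν μ : I →₀ ℕ} (h : LeadsTo B x ν) (hνμ : leadLT ν μ) :
    Low B x μ := by
  obtain ⟨c, hc, y, rfl, hy⟩ := h
  exact low_add (low_smul c (low_basis hνμ)) (low_mono hy hνμ)

theorem low_mul_left {x : A} {μ : I →₀ ℕ} (w : A)
    (h : ∀ ν, B.repr x ν ≠ 0 → Low B (w * B ν) μ) : Low B (w * x) μ := by
  have hx : x = ∑ ν ∈ (B.repr x).support, B.repr x ν • B ν := by
    conv_lhs => rw [← B.linearCombination_repr x]
    rw [Finsupp.linearCombination_apply, Finsupp.sum]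
  have hwx : w * x = ∑ ν ∈ (B.repr x).support, B.repr x ν • (w * B ν) := by
    conv_lhs => rw [hx]
    rw [Finset.mul_sum]
    exact Finset.sum_congr rfl (fun ν _ => (mul_smul_comm _ _ _))
  rw [hwx]
  exact low_sum (fun ν hν => low_smul _ (h ν (Finsupp.mem_support_iff.1 hν)))

theorem leadsTo_mul_left {x : A} {μ ρ : I →₀ ℕ} (w : A)
    (hx : LeadsTo B x μ) (htop : LeadsTo B (w * B μ) ρ)
    (hlow : ∀ ν, leadLT ν μ → Low B (w * B ν) ρ) : LeadsTo B (w * x) ρ := by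
  obtain ⟨c, hc, y, rfl, hy⟩ := hx
  rw [mul_add, mul_smul_comm]
  exact leadsTo_add_low (leadsTo_smul hc htop)
    (low_mul_left w (fun ν hν => hlow ν (hy ν hν)))

end Rep

end LeadAux

open LeadAux in
theorem leading_exponent_of_product_is_sum
    {I K A : Type*} [LinearOrder I] [Field K] [Ring A] [Algebra K A]
    -- `<` on `I` is well founded (no infinite strictly decreasing chains)
    (hwf : WellFounded ((· < ·) : I → I → Prop))
    (a : I → A)
    -- the ordered monomials form a `K`-basis of `A`
    (B : Module.Basis (I →₀ ℕ) K A) (hB : ∀ m : I →₀ ℕ, B m = ordMon a m)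
    -- straightening hypothesis (*)
    (hstr : ∀ i j : I, i < j → ∃ ξ : K, ξ ≠ 0 ∧ ∃ c : (I →₀ ℕ) →₀ K,
      a i * a j = ξ • (a j * a i) + c.sum (fun v ξv => ξv • ordMon a v) ∧
      ∀ v, c v ≠ 0 → leadLT v (Finsupp.single i 1 + Finsupp.single j 1)) :
    ∀ m n : I →₀ ℕ, ordMon a m * ordMon a n ≠ 0 ∧
      isLead B (ordMon a m * ordMon a n) (m + n) := by
  have base : ∀ n : I →₀ ℕ, LeadsTo B (ordMon a n) n := by
    intro n
    rw [← hB n]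
    exact leadsTo_basis n
  have key : ∀ μ : I →₀ ℕ, ∀ m n : I →₀ ℕ, m + n = μ →
      LeadsTo B (ordMon a m * ordMon a n) μ := by
    intro μ0
    refine (leadLT_wf hwf).induction
      (C := fun μ => ∀ m n : I →₀ ℕ, m + n = μ → LeadsTo B (ordMon a m * ordMon a n) μ)
      μ0 ?_
    clear μ0
    intro μ IH1
    suffices H : ∀ d : ℕ, ∀ m n : I →₀ ℕ, m + n = μ → m.degree ≤ d →
        LeadsTo B (ordMon a m * ordMon a n) μ by
      intro m n h
      exact H m.degree m n h le_rfl
    intro d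
    induction d with
    | zero =>
      intro m n hsum hdeg
      have hm : m = 0 := (Finsupp.degree_eq_zero_iff m).1 (Nat.le_antisymm hdeg (Nat.zero_le _))
      subst hm
      rw [zero_add] at hsum
      subst hsum
      rw [ordMon_zero, one_mul]
      exact base n
    | succ d IH2 =>
      intro m n hsum hdeg
      by_cases hm : m = 0
      · subst hm
        rw [zero_add] at hsum
        subst hsum
        rw [ordMon_zero, one_mul]
        exact base n
      -- peel the smallest index `i` off the right of `M m`
      have hs : m.support.Nonempty := Finsupp.support_nonempty_iff.2 hm
      set i := m.support.min' hs with hi_def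
      have him : i ∈ m.support := m.support.min'_mem hs
      have hei_le : Finsupp.single i 1 ≤ m :=
        Finsupp.single_le_iff.2 (Nat.one_le_iff_ne_zero.2 (Finsupp.mem_support_iff.1 him))
      set m' := m - Finsupp.single i 1 with hm'_def
      have hm'add : m' + Finsupp.single i 1 = m := tsub_add_cancel_of_le hei_le
      have hm'le : m' ≤ m := tsub_le_self
      have hsupp_m' : ∀ k ∈ m'.support, i ≤ k := by
        intro k hk
        refine m.support.min'_le k (Finsupp.mem_support_iff.2 ?_)
        have h1 : m' k ≠ 0 := Finsupp.mem_support_iff.1 hk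
        have h2 : m' k ≤ m k := hm'le k
        omega
      have hMm : ordMon a m = ordMon a m' * a i := by
        rw [ordMon_mul_of_le_support a hsupp_m', hm'add]
      have hdeg' : m'.degree ≤ d := by
        have : m'.degree + 1 = m.degree := by
          rw [← hm'add, degree_add, degree_single]
        omega
      by_cases hn : ∀ k ∈ n.support, k ≤ i
      · -- absorption case: `a i * M n = M (eᵢ + n)`
        have habs := mul_ordMon_of_support_le a hn
        have hprod : ordMon a m * ordMon a n
            = ordMon a m' * ordMon a (Finsupp.single i 1 + n) := by
          rw [hMm, mul_assoc, habs]
        rw [hprod]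
        refine IH2 m' (Finsupp.single i 1 + n) ?_ hdeg'
        rw [← hsum, ← hm'add, add_assoc]
      · -- straightening case
        push_neg at hn
        obtain ⟨k0, hk0mem, hk0⟩ := hn
        have hn_ne : n.support.Nonempty := ⟨k0, hk0mem⟩
        set j := n.support.max' hn_ne with hj_def
        have hij : i < j := lt_of_lt_of_le hk0 (n.support.le_max' k0 hk0mem)
        have hjn : j ∈ n.support := n.support.max'_mem hn_ne
        have hsupp_n : ∀ k ∈ n.support, k ≤ j := fun k hk => n.support.le_max' k hk
        have hej_le : Finsupp.single j 1 ≤ n :=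
          Finsupp.single_le_iff.2 (Nat.one_le_iff_ne_zero.2 (Finsupp.mem_support_iff.1 hjn))
        set n' := n - Finsupp.single j 1 with hn'_def
        have hn'add : Finsupp.single j 1 + n' = n := by
          rw [add_comm]; exact tsub_add_cancel_of_le hej_le
        have hn'le : n' ≤ n := tsub_le_self
        have hsupp_n' : ∀ k ∈ n'.support, k ≤ j := by
          intro k hk
          refine hsupp_n k (Finsupp.mem_support_iff.2 ?_)
          have h1 : n' k ≠ 0 := Finsupp.mem_support_iff.1 hk
          have h2 : n' k ≤ n k := hn'le k
          omega
        have hMn : ordMon a n = a j * ordMon a n' := by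
          rw [mul_ordMon_of_support_le a hsupp_n', hn'add]
        obtain ⟨ξ, hξ, c, hcomm, hcv⟩ := hstr i j hij
        -- key algebraic identity
        have hcomm' : ∀ z : A, a i * (a j * z)
            = ξ • (a j * (a i * z)) + ∑ v ∈ c.support, c v • (ordMon a v * z) := by
          intro z
          rw [← mul_assoc, hcomm, add_mul, smul_mul_assoc, mul_assoc, Finsupp.sum,
            Finset.sum_mul]
          congr 1
          exact Finset.sum_congr rfl (fun v _ => smul_mul_assoc _ _ _)
        have key_eq : ordMon a m * ordMon a n
            = ξ • (ordMon a m' * (a j * (a i * ordMon a n')))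
              + ∑ v ∈ c.support, c v • (ordMon a m' * (ordMon a v * ordMon a n')) := by
          rw [hMm, hMn, mul_assoc, ← mul_assoc (a i), mul_assoc (a i)]
          rw [hcomm' (ordMon a n'), mul_add, mul_smul_comm, Finset.mul_sum]
          congr 1
          exact Finset.sum_congr rfl (fun v _ => mul_smul_comm _ _ _)
        -- `ejn' := single j 1 + n'` etc.
        have hμ_eq : m' + (Finsupp.single j 1 + (Finsupp.single i 1 + n')) = μ := by
          rw [← hsum, ← hm'add, ← hn'add]
          abel
        have hn'lt : leadLT n' n := by
          rw [← hn'add]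
          exact leadLT_self_add (by simp)
        -- `a i * M n'` leads to `eᵢ + n'`
        have h1 : LeadsTo B (a i * ordMon a n') (Finsupp.single i 1 + n') := by
          have hlt : leadLT (Finsupp.single i 1 + n') μ := by
            refine leadLT_of_lt_of_le (leadLT_add_left _ hn'lt) ?_
            have heq1 : m' + (Finsupp.single i 1 + n) = μ := by
              rw [← hsum, ← hm'add]; abel
            have := le_add_left m' (Finsupp.single i 1 + n)
            rwa [heq1] at this
          have := IH1 (Finsupp.single i 1 + n') hlt (Finsupp.single i 1) n' rfl
          rwa [ordMon_single_one] at this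
        have hsuppμ1 : ∀ k ∈ (Finsupp.single i 1 + n').support, k ≤ j := by
          intro k hk
          have := Finsupp.support_add hk
          rw [Finset.mem_union] at this
          rcases this with h | h
          · have : k = i := by
              have := Finsupp.support_single_subset h
              simpa using this
            subst this; exact hij.le
          · exact hsupp_n' k h
        -- `a j * (a i * M n')` leads to `eⱼ + (eᵢ + n')`
        have h2 : LeadsTo B (a j * (a i * ordMon a n'))
            (Finsupp.single j 1 + (Finsupp.single i 1 + n')) := by
          refine leadsTo_mul_left (a j) h1 ?_ ?_
          · rw [hB, mul_ordMon_of_support_le a hsuppμ1, ← hB]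
            exact leadsTo_basis _
          · intro ν hν
            have hνsupp : ∀ k ∈ ν.support, k ≤ j := support_le_of_leadLT hν hsuppμ1
            rw [hB, mul_ordMon_of_support_le a hνsupp, ← hB]
            exact low_basis (leadLT_add_left _ hν)
        -- multiply by `M m'` on the left
        have h3 : LeadsTo B
            (ordMon a m' * (a j * (a i * ordMon a n'))) μ := by
          refine leadsTo_mul_left (ordMon a m') h2 ?_ ?_
          · rw [hB]
            refine IH2 m' (Finsupp.single j 1 + (Finsupp.single i 1 + n')) hμ_eq hdeg'
          · intro σ hσ
            have hlt : leadLT (m' + σ) μ := by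
              rw [← hμ_eq]
              exact leadLT_add_left m' hσ
            rw [hB]
            exact leadsTo_low (IH1 (m' + σ) hlt m' σ rfl) hlt
        -- the lower straightening terms
        have h4 : Low B
            (∑ v ∈ c.support, c v • (ordMon a m' * (ordMon a v * ordMon a n'))) μ := by
          refine low_sum (fun v hv => low_smul _ ?_)
          have hvlt : leadLT v (Finsupp.single i 1 + Finsupp.single j 1) :=
            hcv v (Finsupp.mem_support_iff.1 hv)
          have heq2 : m' + (Finsupp.single i 1 + Finsupp.single j 1 + n') = μ := by
            rw [← hμ_eq]; abel
          have hlt2 : leadLT (v + n') μ := by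
            rw [← heq2]
            exact leadLT_of_lt_of_le (leadLT_add_right n' hvlt)
              (le_add_left m' _)
          have h5 : LeadsTo B (ordMon a v * ordMon a n') (v + n') :=
            IH1 (v + n') hlt2 v n' rfl
          refine low_mul_left (ordMon a m') (fun σ hσ => ?_)
          have hσle : σ = v + n' ∨ leadLT σ (v + n') := (leadsTo_isLead h5).2 σ hσ
          have hA : leadLT (m' + (v + n')) μ := by
            rw [← heq2]
            exact leadLT_add_left m' (leadLT_add_right n' hvlt)
          have hmσ : leadLT (m' + σ) μ := by
            rcases hσle with rfl | h
            · exact hA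
            · exact leadLT_trans (leadLT_add_left m' h) hA
          rw [hB]
          exact leadsTo_low (IH1 (m' + σ) hmσ m' σ rfl) hmσ
        rw [key_eq]
        exact leadsTo_add_low (leadsTo_smul hξ h3) h4
  intro m n
  have h := key (m + n) m n rfl
  have hl := leadsTo_isLead h
  exact ⟨fun h0 => hl.1 (by rw [h0]; simp), hl⟩
end

section
/- Under the straightening hypothesis, multiplication by a fixed nonzero element strictly preserves the order of leading exponents of basis monomials: for every nonzero u ∈ A (with |u| defined as the largest exponent in its basis expansion) and all m, m' ∈ O with m < m', the products u·M(m), u·M(m'), M(m)·u, M(m')·u are nonzero, |u·M(m)| < |u·M(m')|, and |M(m)·u| < |M(m')·u|. (Abstract content of Proposition 3.4 of the paper.) -/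
/-!
Proposition 3.4 (abstract content): under the straightening hypothesis,
multiplication by a fixed nonzero element strictly preserves the order of
leading exponents of basis monomials.
-/

open scoped BigOperators

set_option linter.unusedSectionVars false

section OrderAux
variable {I : Type*} [LinearOrder I]

variable {I : Type*} [LinearOrder I]

lemma leadLT_irrefl (m : I →₀ ℕ) : ¬ leadLT m m := by
  rintro ⟨j, hj, -⟩; exact lt_irrefl _ hj

lemma leadLT_trans {x y z : I →₀ ℕ} (h1 : leadLT x y) (h2 : leadLT y z) : leadLT x z := by
  obtain ⟨j1, hj1, ha1⟩ := h1
  obtain ⟨j2, hj2, ha2⟩ := h2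
  rcases lt_trichotomy j1 j2 with h | h | h
  · exact ⟨j2, by rw [ha1 j2 h]; exact hj2, fun i hi => (ha1 i (h.trans hi)).trans (ha2 i hi)⟩
  · subst h; exact ⟨j1, hj1.trans hj2, fun i hi => (ha1 i hi).trans (ha2 i hi)⟩
  · exact ⟨j1, by rw [← ha2 j1 h]; exact hj1, fun i hi => (ha1 i hi).trans (ha2 i (h.trans hi))⟩

lemma leadLT_asymm {x y : I →₀ ℕ} (h1 : leadLT x y) (h2 : leadLT y x) : False :=
  leadLT_irrefl x (leadLT_trans h1 h2)

lemma leadLT_total {m n : I →₀ ℕ} (h : m ≠ n) : leadLT m n ∨ leadLT n m := by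
  classical
  set D := (m.support ∪ n.support).filter (fun i => m i ≠ n i) with hD
  have hmem : ∀ i, m i ≠ n i → i ∈ D := by
    intro i hi
    simp only [hD, Finset.mem_filter, Finset.mem_union, Finsupp.mem_support_iff]
    refine ⟨?_, hi⟩
    by_contra hc
    push_neg at hc
    exact hi (hc.1.trans hc.2.symm)
  have hne : D.Nonempty := by
    by_contra hc
    rw [Finset.not_nonempty_iff_eq_empty] at hc
    apply h
    ext i
    by_contra hi
    simpa [hc] using hmem i hi
  set j := D.max' hne with hj
  have hjD : j ∈ D := D.max'_mem hne
  have hjd : m j ≠ n j := (Finset.mem_filter.mp hjD).2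
  have habove : ∀ i, j < i → m i = n i := by
    intro i hi
    by_contra hc
    exact absurd (D.le_max' i (hmem i hc)) (not_le.mpr hi)
  rcases lt_or_gt_of_ne hjd with hlt | hgt
  · exact Or.inl ⟨j, hlt, habove⟩
  · exact Or.inr ⟨j, hgt, fun i hi => (habove i hi).symm⟩

lemma leadLT_iff_lex {m n : I →₀ ℕ} :
    leadLT m n ↔ Finsupp.Lex (Function.swap (· < ·)) (· < ·) m n := by
  constructor
  · rintro ⟨j, h1, h2⟩; exact ⟨j, fun d hd => h2 d hd, h1⟩
  · rintro ⟨j, h2, h1⟩; exact ⟨j, h1, fun i hi => h2 i hi⟩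

lemma leadLT_wf (hwf : WellFounded ((· < ·) : I → I → Prop)) :
    WellFounded (leadLT : (I →₀ ℕ) → (I →₀ ℕ) → Prop) := by
  have h : WellFounded (Finsupp.Lex (Function.swap ((· < ·) : I → I → Prop))
      ((· < ·) : ℕ → ℕ → Prop)) :=
    Finsupp.Lex.wellFounded' (fun n h => Nat.not_lt_zero n h) (Nat.lt_wfRel.wf) hwf
  exact Subrelation.wf (fun {x y} hxy => leadLT_iff_lex.mp hxy) h

lemma leadLT_add_left (z : I →₀ ℕ) {x y : I →₀ ℕ} (h : leadLT x y) : leadLT (z + x) (z + y) := by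
  obtain ⟨j, hj, ha⟩ := h
  exact ⟨j, by simp only [Finsupp.add_apply]; exact Nat.add_lt_add_left hj _,
    fun i hi => by simp [ha i hi]⟩

lemma leadLT_add_right (z : I →₀ ℕ) {x y : I →₀ ℕ} (h : leadLT x y) : leadLT (x + z) (y + z) := by
  obtain ⟨j, hj, ha⟩ := h
  exact ⟨j, by simp only [Finsupp.add_apply]; exact Nat.add_lt_add_right hj _,
    fun i hi => by simp [ha i hi]⟩

lemma exists_leadLT_max (s : Finset (I →₀ ℕ)) (hs : s.Nonempty) :
    ∃ μ ∈ s, ∀ ν ∈ s, ν = μ ∨ leadLT ν μ := by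
  induction hs using Finset.Nonempty.cons_induction with
  | singleton a => exact ⟨a, Finset.mem_singleton_self a, by simp⟩
  | cons a s ha hs ih =>
    obtain ⟨μ, hμs, hμ⟩ := ih
    by_cases ham : a = μ
    · subst ham
      exact ⟨a, Finset.mem_cons_self _ _, by
        intro ν hν
        rcases Finset.mem_cons.mp hν with rfl | hν
        · exact Or.inl rfl
        · exact hμ ν hν⟩
    rcases leadLT_total ham with hlt | hgt
    · refine ⟨μ, Finset.mem_cons.mpr (Or.inr hμs), ?_⟩
      intro ν hν
      rcases Finset.mem_cons.mp hν with rfl | hν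
      · exact Or.inr hlt
      · exact hμ ν hν
    · refine ⟨a, Finset.mem_cons_self _ _, ?_⟩
      intro ν hν
      rcases Finset.mem_cons.mp hν with rfl | hν
      · exact Or.inl rfl
      · rcases hμ ν hν with rfl | h
        · exact Or.inr hgt
        · exact Or.inr (leadLT_trans h hgt)

end OrderAux

section ListAux
variable {I : Type*} [LinearOrder I] {A : Type*} [Ring A]

variable {I : Type*} [LinearOrder I] {A : Type*} [Ring A]

/-- The product of the letters of a word. -/
noncomputable def Wd (a : I → A) (l : List I) : A := (l.map a).prod

/-- The exponent (abelianization) of a word. -/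
noncomputable def Ed (l : List I) : I →₀ ℕ := (l.map fun i => Finsupp.single i 1).sum

/-- The decreasing word with exponent `n`. -/
def wordOf (n : I →₀ ℕ) : List I :=
  (n.support.sort (· ≤ ·)).reverse.flatMap fun i => List.replicate (n i) i

lemma Wd_append (a : I → A) (l₁ l₂ : List I) : Wd a (l₁ ++ l₂) = Wd a l₁ * Wd a l₂ := by
  simp [Wd]

lemma Wd_cons (a : I → A) (i : I) (l : List I) : Wd a (i :: l) = a i * Wd a l := by
  simp [Wd]

lemma Ed_append (l₁ l₂ : List I) : Ed (l₁ ++ l₂) = Ed l₁ + Ed l₂ := by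
  simp [Ed]

lemma Ed_cons (i : I) (l : List I) : Ed (i :: l) = Finsupp.single i 1 + Ed l := by
  simp [Ed]

lemma Ed_apply (l : List I) (x : I) : Ed l x = l.count x := by
  induction l with
  | nil => simp [Ed]
  | cons i t ih =>
    rw [Ed_cons, Finsupp.add_apply, ih, List.count_cons, Finsupp.single_apply]
    by_cases h : i = x
    · subst h
      simp
      omega
    · simp [h]

lemma count_wordOf (n : I →₀ ℕ) (x : I) : (wordOf n).count x = n x := by
  classical
  rw [wordOf, List.count_flatMap]
  have h1 : (List.count x ∘ fun i => List.replicate (n i) i)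
      = fun i => if i = x then n i else 0 := by
    funext i
    simp [List.count_replicate]
  rw [h1]
  have hperm : ((n.support.sort (· ≤ ·)).reverse.map fun i => if i = x then n i else 0).Perm
      (n.support.toList.map fun i => if i = x then n i else 0) :=
    ((List.reverse_perm _).trans (n.support.sort_perm_toList (· ≤ ·))).map _
  rw [List.Perm.sum_eq hperm, Finset.sum_map_toList, Finset.sum_ite_eq' n.support x n]
  split
  · rfl
  · next h => exact (Finsupp.notMem_support_iff.mp h).symm

lemma sorted_wordOf (n : I →₀ ℕ) : (wordOf n).Pairwise (· ≥ ·) := by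
  rw [wordOf, List.pairwise_flatMap]
  constructor
  · intro i _
    exact List.pairwise_replicate.mpr (Or.inr le_rfl)
  · have hsort : ((n.support.sort (· ≤ ·)).reverse).Pairwise (· > ·) := by
      rw [List.pairwise_reverse]
      exact (n.support.sortedLT_sort).pairwise
    refine hsort.imp ?_
    intro i j hij x hx y hy
    rw [List.eq_of_mem_replicate hx, List.eq_of_mem_replicate hy]
    exact le_of_lt hij

lemma Ed_wordOf (n : I →₀ ℕ) : Ed (wordOf n) = n := by
  ext x
  rw [Ed_apply, count_wordOf]

lemma sorted_eq_wordOf {l : List I} (h : l.Pairwise (· ≥ ·)) : l = wordOf (Ed l) := by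
  refine List.Perm.eq_of_pairwise' h (sorted_wordOf _) ?_
  rw [List.perm_iff_count]
  intro x
  rw [count_wordOf, Ed_apply]

lemma Wd_wordOf (a : I → A) (n : I →₀ ℕ) : Wd a (wordOf n) = ordMon a n := by
  rw [Wd, wordOf, List.map_flatMap, ordMon]
  rw [List.flatMap, List.prod_flatten]
  congr 1
  rw [List.map_map]
  refine List.map_congr_left ?_
  intro i _
  simp [List.prod_replicate]

end ListAux

section InvAux
variable {I : Type*} [LinearOrder I]

variable {I : Type*} [LinearOrder I]

/-- Number of inversions (out-of-order pairs) in a word, for the decreasing order. -/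
def invCount : List I → ℕ
  | [] => 0
  | x :: xs => (xs.countP fun y => decide (x < y)) + invCount xs

lemma invCount_swap (p s : List I) {i j : I} (hij : i < j) :
    invCount (p ++ j :: i :: s) + 1 = invCount (p ++ i :: j :: s) := by
  induction p with
  | nil =>
    simp only [List.nil_append, invCount, List.countP_cons]
    simp [hij, lt_asymm hij]
    omega
  | cons x t ih =>
    have hperm : (t ++ j :: i :: s).Perm (t ++ i :: j :: s) :=
      List.Perm.append_left t (List.Perm.swap _ _ _)
    simp only [List.cons_append, invCount, List.append_eq]
    rw [hperm.countP_eq]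
    omega

lemma exists_adjacent_lt {l : List I} (h : ¬ l.Pairwise (· ≥ ·)) :
    ∃ p i j s, l = p ++ i :: j :: s ∧ i < j := by
  induction l with
  | nil => exact absurd List.Pairwise.nil h
  | cons x t ih =>
    by_cases ht : t.Pairwise (· ≥ ·)
    · have hx : ¬ ∀ y ∈ t, x ≥ y := fun hall => h (List.pairwise_cons.mpr ⟨hall, ht⟩)
      push_neg at hx
      obtain ⟨y, hy, hxy⟩ := hx
      cases t with
      | nil => exact absurd hy List.not_mem_nil
      | cons z t' =>
        have hyz : y ≤ z := by
          rcases List.mem_cons.mp hy with rfl | hy'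
          · exact le_rfl
          · exact (List.pairwise_cons.mp ht).1 y hy'
        exact ⟨[], x, z, t', rfl, lt_of_lt_of_le hxy hyz⟩
    · obtain ⟨p, i, j, s, heq, hij⟩ := ih ht
      exact ⟨x :: p, i, j, s, by rw [heq]; rfl, hij⟩

end InvAux

section KeyAux
variable {I K A : Type*} [LinearOrder I] [Field K] [Ring A] [Algebra K A]

lemma key_lemma (hwf : WellFounded ((· < ·) : I → I → Prop)) (a : I → A)
    (B : Module.Basis (I →₀ ℕ) K A) (hB : ∀ m : I →₀ ℕ, B m = ordMon a m)
    (hstr : ∀ i j : I, i < j → ∃ ξ : K, ξ ≠ 0 ∧ ∃ c : (I →₀ ℕ) →₀ K,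
      a i * a j = ξ • (a j * a i) + c.sum (fun v ξv => ξv • ordMon a v) ∧
      ∀ v, c v ≠ 0 → leadLT v (Finsupp.single i 1 + Finsupp.single j 1)) :
    ∀ l : List I, B.repr (Wd a l) (Ed l) ≠ 0 ∧
      ∀ ν, B.repr (Wd a l) ν ≠ 0 → ν = Ed l ∨ leadLT ν (Ed l) := by
  have hwfR : WellFounded (fun l l' : List I =>
      Prod.Lex leadLT (· < ·) (Ed l, invCount l) (Ed l', invCount l')) :=
    InvImage.wf (fun l => (Ed l, invCount l)) ((leadLT_wf hwf).prod_lex (Nat.lt_wfRel.wf))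
  intro l
  induction l using WellFounded.induction hwfR with
  | _ l IH => ?_
  by_cases hs : l.Pairwise (· ≥ ·)
  · have hWl : Wd a l = B (Ed l) := by
      conv_lhs => rw [sorted_eq_wordOf hs]
      rw [Wd_wordOf, hB]
    rw [hWl, B.repr_self]
    constructor
    · simp
    · intro ν hν
      left
      by_contra hne
      exact hν (Finsupp.single_eq_of_ne' (Ne.symm hne))
  · obtain ⟨p, i, j, s, rfl, hij⟩ := exists_adjacent_lt hs
    obtain ⟨ξ, hξ, c, heq, hc⟩ := hstr i j hij
    set l₂ := p ++ j :: i :: s with hl₂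
    have hEd2 : Ed l₂ = Ed (p ++ i :: j :: s) := by
      simp only [hl₂, Ed_append, Ed_cons]
      abel
    have e1 : Wd a (p ++ i :: j :: s) = Wd a p * ((a i * a j) * Wd a s) := by
      rw [Wd_append, Wd_cons, Wd_cons, mul_assoc]
    have hW : Wd a (p ++ i :: j :: s) =
        ξ • Wd a l₂ + c.sum fun v ξv => ξv • Wd a (p ++ (wordOf v ++ s)) := by
      rw [e1, heq, add_mul, mul_add, smul_mul_assoc, mul_smul_comm, Finsupp.sum_mul,
        Finsupp.mul_sum]
      congr 1
      · rw [hl₂, Wd_append, Wd_cons, Wd_cons, mul_assoc]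
      · refine Finsupp.sum_congr fun v hv => ?_
        rw [smul_mul_assoc, mul_smul_comm, Wd_append, Wd_append, Wd_wordOf]
    have hR2 : Prod.Lex leadLT (· < ·) (Ed l₂, invCount l₂)
        (Ed (p ++ i :: j :: s), invCount (p ++ i :: j :: s)) := by
      rw [hEd2]
      refine Prod.Lex.right _ ?_
      have h := invCount_swap p s hij
      rw [hl₂]
      omega
    have IH2 := IH l₂ hR2
    have hEv : ∀ v, c v ≠ 0 → leadLT (Ed (p ++ (wordOf v ++ s))) (Ed (p ++ i :: j :: s)) := by
      intro v hv
      have e2 : Ed (p ++ (wordOf v ++ s)) = Ed p + (v + Ed s) := by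
        simp [Ed_append, Ed_wordOf]
      have e3 : Ed (p ++ i :: j :: s)
          = Ed p + ((Finsupp.single i 1 + Finsupp.single j 1) + Ed s) := by
        simp only [Ed_append, Ed_cons]
        abel
      rw [e2, e3]
      exact leadLT_add_left _ (leadLT_add_right _ (hc v hv))
    have IHv : ∀ v ∈ c.support, B.repr (Wd a (p ++ (wordOf v ++ s)))
        (Ed (p ++ (wordOf v ++ s))) ≠ 0 ∧
        ∀ ν, B.repr (Wd a (p ++ (wordOf v ++ s))) ν ≠ 0 →
          ν = Ed (p ++ (wordOf v ++ s)) ∨ leadLT ν (Ed (p ++ (wordOf v ++ s))) := by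
      intro v hv
      exact IH _ (Prod.Lex.left _ _ (hEv v (Finsupp.mem_support_iff.mp hv)))
    have hrepr : ∀ ν, B.repr (Wd a (p ++ i :: j :: s)) ν
        = ξ * B.repr (Wd a l₂) ν
          + c.sum fun v ξv => ξv * B.repr (Wd a (p ++ (wordOf v ++ s))) ν := by
      intro ν
      rw [hW, map_add, map_smul, map_finsuppSum, Finsupp.add_apply, Finsupp.smul_apply,
        Finsupp.sum_apply, smul_eq_mul]
      congr 1
      refine Finsupp.sum_congr fun v hv => ?_
      rw [map_smul, Finsupp.smul_apply, smul_eq_mul]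
    have hzero : ∀ v ∈ c.support,
        B.repr (Wd a (p ++ (wordOf v ++ s))) (Ed (p ++ i :: j :: s)) = 0 := by
      intro v hv
      by_contra hne
      rcases (IHv v hv).2 _ hne with he | hlt
      · have h' := hEv v (Finsupp.mem_support_iff.mp hv)
        rw [← he] at h'
        exact leadLT_irrefl _ h'
      · exact leadLT_asymm hlt (hEv v (Finsupp.mem_support_iff.mp hv))
    constructor
    · rw [hrepr]
      have hsum0 : (c.sum fun v ξv =>
          ξv * B.repr (Wd a (p ++ (wordOf v ++ s))) (Ed (p ++ i :: j :: s))) = 0 := by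
        rw [Finsupp.sum]
        refine Finset.sum_eq_zero fun v hv => ?_
        rw [hzero v hv, mul_zero]
      rw [hsum0, add_zero, ← hEd2]
      exact mul_ne_zero hξ IH2.1
    · intro ν hν
      rw [hrepr ν] at hν
      by_cases h2 : B.repr (Wd a l₂) ν = 0
      · have hsum : (c.sum fun v ξv =>
            ξv * B.repr (Wd a (p ++ (wordOf v ++ s))) ν) ≠ 0 := by
          intro h0
          apply hν
          rw [h2, mul_zero, zero_add, h0]
        obtain ⟨v, hv, hvne⟩ : ∃ v ∈ c.support,
            c v * B.repr (Wd a (p ++ (wordOf v ++ s))) ν ≠ 0 := by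
          by_contra hall
          push_neg at hall
          exact hsum (by rw [Finsupp.sum]; exact Finset.sum_eq_zero hall)
        have hrv : B.repr (Wd a (p ++ (wordOf v ++ s))) ν ≠ 0 := by
          intro h0
          exact hvne (by rw [h0, mul_zero])
        rcases (IHv v hv).2 ν hrv with he | hlt
        · right
          rw [he]
          exact hEv v (Finsupp.mem_support_iff.mp hv)
        · right
          exact leadLT_trans hlt (hEv v (Finsupp.mem_support_iff.mp hv))
      · rcases IH2.2 ν h2 with he | hlt
        · left
          rw [he, hEd2]
        · right
          rw [← hEd2]
          exact hlt

lemma lead_of_mul (hwf : WellFounded ((· < ·) : I → I → Prop)) (a : I → A)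
    (B : Module.Basis (I →₀ ℕ) K A) (hB : ∀ m : I →₀ ℕ, B m = ordMon a m)
    (hstr : ∀ i j : I, i < j → ∃ ξ : K, ξ ≠ 0 ∧ ∃ c : (I →₀ ℕ) →₀ K,
      a i * a j = ξ • (a j * a i) + c.sum (fun v ξv => ξv • ordMon a v) ∧
      ∀ v, c v ≠ 0 → leadLT v (Finsupp.single i 1 + Finsupp.single j 1))
    (x : A) (hx : x ≠ 0) :
    ∃ μ, ∀ n : I →₀ ℕ,
      isLead B (x * ordMon a n) (μ + n) ∧ isLead B (ordMon a n * x) (μ + n) := by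
  have hrx : B.repr x ≠ 0 := fun h => hx (by
    have := congrArg B.repr.symm h
    simpa using this)
  obtain ⟨μ, hμs, hmax⟩ := exists_leadLT_max (B.repr x).support
    (Finsupp.support_nonempty_iff.mpr hrx)
  refine ⟨μ, fun n => ?_⟩
  have hkey := key_lemma hwf a B hB hstr
  have hkeyL : ∀ ν : I →₀ ℕ, B.repr (Wd a (wordOf ν ++ wordOf n)) (ν + n) ≠ 0 ∧
      ∀ τ, B.repr (Wd a (wordOf ν ++ wordOf n)) τ ≠ 0 → τ = ν + n ∨ leadLT τ (ν + n) := by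
    intro ν
    have := hkey (wordOf ν ++ wordOf n)
    rwa [Ed_append, Ed_wordOf, Ed_wordOf] at this
  have hkeyR : ∀ ν : I →₀ ℕ, B.repr (Wd a (wordOf n ++ wordOf ν)) (ν + n) ≠ 0 ∧
      ∀ τ, B.repr (Wd a (wordOf n ++ wordOf ν)) τ ≠ 0 → τ = ν + n ∨ leadLT τ (ν + n) := by
    intro ν
    have := hkey (wordOf n ++ wordOf ν)
    rwa [Ed_append, Ed_wordOf, Ed_wordOf, add_comm n ν] at this
  have hx_eq : (B.repr x).sum (fun ν cν => cν • B ν) = x := by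
    conv_rhs => rw [← B.linearCombination_repr x]
    rw [Finsupp.linearCombination_apply]
  have hmulL : x * ordMon a n
      = (B.repr x).sum fun ν cν => cν • Wd a (wordOf ν ++ wordOf n) := by
    conv_lhs => rw [← hx_eq]
    rw [Finsupp.sum_mul]
    refine Finsupp.sum_congr fun ν hν => ?_
    rw [smul_mul_assoc, hB, ← Wd_wordOf a ν, ← Wd_wordOf a n, ← Wd_append]
  have hmulR : ordMon a n * x
      = (B.repr x).sum fun ν cν => cν • Wd a (wordOf n ++ wordOf ν) := by
    conv_lhs => rw [← hx_eq]
    rw [Finsupp.mul_sum]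
    refine Finsupp.sum_congr fun ν hν => ?_
    rw [mul_smul_comm, hB, ← Wd_wordOf a ν, ← Wd_wordOf a n, ← Wd_append]
  have hreprL : ∀ τ, B.repr (x * ordMon a n) τ
      = (B.repr x).sum fun ν cν => cν * B.repr (Wd a (wordOf ν ++ wordOf n)) τ := by
    intro τ
    rw [hmulL, map_finsuppSum, Finsupp.sum_apply]
    refine Finsupp.sum_congr fun ν hν => ?_
    rw [map_smul, Finsupp.smul_apply, smul_eq_mul]
  have hreprR : ∀ τ, B.repr (ordMon a n * x) τ
      = (B.repr x).sum fun ν cν => cν * B.repr (Wd a (wordOf n ++ wordOf ν)) τ := by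
    intro τ
    rw [hmulR, map_finsuppSum, Finsupp.sum_apply]
    refine Finsupp.sum_congr fun ν hν => ?_
    rw [map_smul, Finsupp.smul_apply, smul_eq_mul]
  have hterm0 : ∀ (w : (I →₀ ℕ) → List I),
      (∀ ν : I →₀ ℕ, B.repr (Wd a (w ν)) (ν + n) ≠ 0 ∧
        ∀ τ, B.repr (Wd a (w ν)) τ ≠ 0 → τ = ν + n ∨ leadLT τ (ν + n)) →
      ∀ ν ∈ (B.repr x).support, ν ≠ μ → B.repr (Wd a (w ν)) (μ + n) = 0 := by
    intro w hw ν hν hνμ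
    by_contra hne
    have hνlt : leadLT ν μ := by
      rcases hmax ν hν with rfl | h
      · exact absurd rfl hνμ
      · exact h
    have hlt : leadLT (ν + n) (μ + n) := leadLT_add_right n hνlt
    rcases (hw ν).2 _ hne with he | hlt'
    · rw [← he] at hlt
      exact leadLT_irrefl _ hlt
    · exact leadLT_asymm hlt' hlt
  have hmain : ∀ (w : (I →₀ ℕ) → List I) (y : A),
      (∀ τ, B.repr y τ = (B.repr x).sum fun ν cν => cν * B.repr (Wd a (w ν)) τ) →
      (∀ ν : I →₀ ℕ, B.repr (Wd a (w ν)) (ν + n) ≠ 0 ∧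
        ∀ τ, B.repr (Wd a (w ν)) τ ≠ 0 → τ = ν + n ∨ leadLT τ (ν + n)) →
      isLead B y (μ + n) := by
    intro w y hy hw
    constructor
    · rw [hy, Finsupp.sum, Finset.sum_eq_single μ]
      · exact mul_ne_zero (Finsupp.mem_support_iff.mp hμs) (hw μ).1
      · intro ν hν hνμ
        rw [hterm0 w hw ν hν hνμ, mul_zero]
      · intro h
        exact absurd hμs h
    · intro τ hτ
      rw [hy] at hτ
      obtain ⟨ν, hν, hνne⟩ : ∃ ν ∈ (B.repr x).support,
          B.repr x ν * B.repr (Wd a (w ν)) τ ≠ 0 := by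
        by_contra hall
        push_neg at hall
        exact hτ (by rw [Finsupp.sum]; exact Finset.sum_eq_zero hall)
      have hrv : B.repr (Wd a (w ν)) τ ≠ 0 := by
        intro h0
        exact hνne (by rw [h0, mul_zero])
      have hνμn : ν + n = μ + n ∨ leadLT (ν + n) (μ + n) := by
        rcases hmax ν hν with rfl | h
        · exact Or.inl rfl
        · exact Or.inr (leadLT_add_right n h)
      rcases (hw ν).2 τ hrv with he | hlt
      · rcases hνμn with he2 | hlt2
        · left
          rw [he, he2]
        · right
          rw [he]
          exact hlt2
      · rcases hνμn with he2 | hlt2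
        · right
          rw [he2] at hlt
          exact hlt
        · right
          exact leadLT_trans hlt hlt2
  exact ⟨hmain _ _ hreprL hkeyL, hmain _ _ hreprR hkeyR⟩

end KeyAux

theorem multiplication_strictly_preserves_leading_order
    {I K A : Type*} [LinearOrder I] [Field K] [Ring A] [Algebra K A]
    -- `<` on `I` is well founded (no infinite strictly decreasing chains)
    (hwf : WellFounded ((· < ·) : I → I → Prop))
    (a : I → A)
    -- the ordered monomials form a `K`-basis of `A`
    (B : Module.Basis (I →₀ ℕ) K A) (hB : ∀ m : I →₀ ℕ, B m = ordMon a m)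
    -- straightening hypothesis (*)
    (hstr : ∀ i j : I, i < j → ∃ ξ : K, ξ ≠ 0 ∧ ∃ c : (I →₀ ℕ) →₀ K,
      a i * a j = ξ • (a j * a i) + c.sum (fun v ξv => ξv • ordMon a v) ∧
      ∀ v, c v ≠ 0 → leadLT v (Finsupp.single i 1 + Finsupp.single j 1))
    (u : A) (hu : u ≠ 0)
    (m m' : I →₀ ℕ) (hmm' : leadLT m m') :
    u * ordMon a m ≠ 0 ∧ u * ordMon a m' ≠ 0 ∧
    ordMon a m * u ≠ 0 ∧ ordMon a m' * u ≠ 0 ∧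
    (∃ μ μ' : I →₀ ℕ, isLead B (u * ordMon a m) μ ∧
      isLead B (u * ordMon a m') μ' ∧ leadLT μ μ') ∧
    (∃ ν ν' : I →₀ ℕ, isLead B (ordMon a m * u) ν ∧
      isLead B (ordMon a m' * u) ν' ∧ leadLT ν ν') := by
  obtain ⟨μ, hμ⟩ := lead_of_mul hwf a B hB hstr u hu
  have hne : ∀ (y : A) (τ : I →₀ ℕ), isLead B y τ → y ≠ 0 := by
    rintro y τ ⟨h1, -⟩ rfl
    exact h1 (by simp)
  have hlt : leadLT (μ + m) (μ + m') := leadLT_add_left μ hmm'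
  exact ⟨hne _ _ (hμ m).1, hne _ _ (hμ m').1, hne _ _ (hμ m).2, hne _ _ (hμ m').2,
    ⟨μ + m, μ + m', (hμ m).1, (hμ m').1, hlt⟩,
    ⟨μ + m, μ + m', (hμ m).2, (hμ m').2, hlt⟩⟩
end
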